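/- If one angle of a triangle with integer side lengths is a rational multiple of π, then that angle equals π/3, π/2, or 2π/3. -/

import Mathlib

open EuclideanGeometry

/-- If `θ` is a rational multiple of `π`, then `2 cos θ` (as a complex number)
is an algebraic integer. -/
lemma isIntegral_two_cos {θ : ℝ} {m : ℤ} {n : ℕ} (hn : 0 < n)
    (hθ : θ = ((m : ℝ) / n) * Real.pi) :
    IsIntegral ℤ ((2 * Real.cos θ : ℝ) : ℂ) := by
  set z : ℂ := Complex.exp (θ * Complex.I) with hz
  have hzn : z ^ (2 * n) = 1 := by
    rw [hz, ← Complex.exp_nat_mul]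
    rw [show ((2 * n : ℕ) : ℂ) * (θ * Complex.I) = (m : ℂ) * (2 * Real.pi * Complex.I) by
      rw [hθ]
      have hn' : (n : ℂ) ≠ 0 := by exact_mod_cast hn.ne'
      push_cast
      field_simp]
    exact Complex.exp_int_mul_two_pi_mul_I m
  have hzint : IsIntegral ℤ z := by
    refine ⟨Polynomial.X ^ (2 * n) - Polynomial.C 1,
      Polynomial.monic_X_pow_sub_C 1 (by omega), ?_⟩
    simp [hzn]
  have hzinv : z⁻¹ = z ^ (2 * n - 1) := by
    refine inv_eq_of_mul_eq_one_right ?_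
    rw [← pow_succ']
    rw [show 2 * n - 1 + 1 = 2 * n by omega]
    exact hzn
  have hzinvint : IsIntegral ℤ (z⁻¹) := by
    rw [hzinv]; exact hzint.pow _
  have h2cos : ((2 * Real.cos θ : ℝ) : ℂ) = z + z⁻¹ := by
    rw [hz, ← Complex.exp_neg]
    push_cast
    rw [Complex.two_cos]
    ring_nf
  rw [h2cos]
  exact hzint.add hzinvint

/-- Niven-type statement: if `θ` is a rational multiple of `π` and `cos θ` is rational,
then `2 cos θ` is an integer. -/
lemma two_cos_eq_int {θ : ℝ} {m : ℤ} {n : ℕ} (hn : 0 < n)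
    (hθ : θ = ((m : ℝ) / n) * Real.pi) {q : ℚ} (hq : Real.cos θ = q) :
    ∃ k : ℤ, (k : ℝ) = 2 * Real.cos θ := by
  have h1 : IsIntegral ℤ ((2 * Real.cos θ : ℝ) : ℂ) := isIntegral_two_cos hn hθ
  have h2 : ((2 * Real.cos θ : ℝ) : ℂ) = algebraMap ℚ ℂ (2 * q) := by
    rw [hq]; simp
  rw [h2] at h1
  have h3 : IsIntegral ℤ ((2 : ℚ) * q) :=
    (isIntegral_algebraMap_iff (algebraMap ℚ ℂ).injective).mp h1
  obtain ⟨k, hk⟩ := IsIntegrallyClosed.isIntegral_iff.mp h3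
  refine ⟨k, ?_⟩
  have hk' : (k : ℚ) = 2 * q := by exact_mod_cast hk
  rw [hq]
  exact_mod_cast congrArg (fun x : ℚ => (x : ℝ)) hk'

theorem diophantine_triangle_rational_angle
    (A B C : EuclideanSpace ℝ (Fin 2))
    (hABC : AffineIndependent ℝ ![A, B, C])
    (hab : ∃ n : ℕ, 0 < n ∧ dist A B = n)
    (hbc : ∃ n : ℕ, 0 < n ∧ dist B C = n)
    (hca : ∃ n : ℕ, 0 < n ∧ dist C A = n)
    (hA : ∃ m n : ℤ, n ≠ 0 ∧ ∠ B A C = (m / n : ℝ) * Real.pi) :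
    ∠ B A C = Real.pi / 3 ∨ ∠ B A C = Real.pi / 2 ∨ ∠ B A C = 2 * Real.pi / 3 := by
  obtain ⟨b, hb, hab⟩ := hab
  obtain ⟨a, ha, hbc⟩ := hbc
  obtain ⟨c, hc, hca⟩ := hca
  obtain ⟨m, n, hn, hθ⟩ := hA
  set θ := ∠ B A C with hθdef
  -- the angle is strictly between 0 and π
  have hncol : ¬Collinear ℝ ({B, A, C} : Set _) := by
    have := affineIndependent_iff_not_collinear_set.mp hABC
    rwa [Set.insert_comm] at this
  have hθ0 : 0 < θ := EuclideanGeometry.angle_pos_of_not_collinear hncol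
  have hθπ : θ < Real.pi := EuclideanGeometry.angle_lt_pi_of_not_collinear hncol
  -- cos θ is rational, by the law of cosines
  have hlaw := EuclideanGeometry.law_cos B A C
  rw [hbc, dist_comm B A, hab] at hlaw
  rw [hca] at hlaw
  have hb' : (0 : ℝ) < b := by exact_mod_cast hb
  have hc' : (0 : ℝ) < c := by exact_mod_cast hc
  set q : ℚ := ((b : ℚ) ^ 2 + (c : ℚ) ^ 2 - (a : ℚ) ^ 2) / (2 * b * c) with hqdef
  have hq : Real.cos θ = q := by
    rw [hqdef]
    push_cast
    rw [eq_div_iff (by positivity)]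
    nlinarith [hlaw]
  -- normalize the rational multiple to have a natural denominator
  have hrat : ∃ m' : ℤ, ∃ n' : ℕ, 0 < n' ∧ θ = ((m' : ℝ) / n') * Real.pi := by
    rcases lt_or_gt_of_ne hn with h | h
    · exact ⟨-m, (-n).toNat, by omega, by
        rw [hθ]
        have : (((-n).toNat : ℝ)) = (-n : ℤ) := by
          norm_cast; omega
        rw [this]
        push_cast
        rw [div_neg, neg_div, neg_neg]⟩
    · exact ⟨m, n.toNat, by omega, by
        rw [hθ]
        have : ((n.toNat : ℝ)) = (n : ℤ) := by norm_cast; omega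
        rw [this]⟩
  obtain ⟨m', n', hn', hθ'⟩ := hrat
  obtain ⟨k, hk⟩ := two_cos_eq_int hn' hθ' hq
  -- bound k
  have hcos1 : Real.cos θ < 1 := by
    have := Real.cos_lt_cos_of_nonneg_of_le_pi le_rfl hθπ.le hθ0
    rwa [Real.cos_zero] at this
  have hcos2 : -1 < Real.cos θ := by
    have := Real.cos_lt_cos_of_nonneg_of_le_pi hθ0.le le_rfl hθπ
    rwa [Real.cos_pi] at this
  have hk1 : (k : ℝ) < 2 := by rw [hk]; linarith
  have hk2 : (-2 : ℝ) < k := by rw [hk]; linarith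
  have hk1' : k < 2 := by exact_mod_cast hk1
  have hk2' : -2 < k := by exact_mod_cast hk2
  have hmem : θ ∈ Set.Icc 0 Real.pi := ⟨hθ0.le, hθπ.le⟩
  have hπ := Real.pi_pos
  interval_cases k
  · -- cos θ = -1/2, θ = 2π/3
    right; right
    have hcos : Real.cos θ = -(1 / 2) := by
      have : (-1 : ℝ) = 2 * Real.cos θ := by exact_mod_cast hk
      linarith
    refine Real.injOn_cos hmem ⟨by linarith, by linarith⟩ ?_
    rw [hcos, show 2 * Real.pi / 3 = Real.pi - Real.pi / 3 by ring,
      Real.cos_pi_sub, Real.cos_pi_div_three]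
  · -- cos θ = 0, θ = π/2
    right; left
    have hcos : Real.cos θ = 0 := by
      have : (0 : ℝ) = 2 * Real.cos θ := by exact_mod_cast hk
      linarith
    refine Real.injOn_cos hmem ⟨by linarith, by linarith⟩ ?_
    rw [hcos, Real.cos_pi_div_two]
  · -- cos θ = 1/2, θ = π/3
    left
    have hcos : Real.cos θ = 1 / 2 := by
      have : (1 : ℝ) = 2 * Real.cos θ := by exact_mod_cast hk
      linarith
    refine Real.injOn_cos hmem ⟨by linarith, by linarith⟩ ?_
    rw [hcos, Real.cos_pi_div_three]
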